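/- Let α > 0, δ ∈ (0, α), set ω = (α − δ)/2, and let g : (0,∞) → ℝ satisfy: g and g' are absolutely continuous and summable on (0,∞); g ≥ 0 and g' ≤ 0 on (0,∞); and (α − δ) g'(s) − g''(s) ≤ 0 for a.e. s > 0. Let E be a real Hilbert space and let η : (0,∞) → E be locally absolutely continuous with η(s) → 0 as s → 0⁺, ∫₀^∞ −g'(s) ‖η(s)‖² ds < ∞ and ∫₀^∞ −g'(s) ‖η'(s)‖² ds < ∞. Then ∫₀^∞ −g'(s) ⟨−η'(s) − ω η(s), η(s)⟩ ds ≤ 0; that is, ∫₀^∞ −g'(s) ⟨−η'(s), η(s)⟩ ds ≤ ω ∫₀^∞ −g'(s) ‖η(s)‖² ds. -/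

import Mathlib

open MeasureTheory Filter Topology Set

section Bilin
variable {E F G : Type*} [NormedAddCommGroup E] [NormedSpace ℝ E] [CompleteSpace E]
  [NormedAddCommGroup F] [NormedSpace ℝ F] [CompleteSpace F]
  [NormedAddCommGroup G] [NormedSpace ℝ G] [CompleteSpace G]

lemma bilin_core (B : E →L[ℝ] F →L[ℝ] G) {u' : ℝ → E} {v' : ℝ → F} {a b : ℝ}
    (hu : IntegrableOn u' (Ioc a b)) (hv : IntegrableOn v' (Ioc a b)) :
    B (∫ t in Ioc a b, u' t) (∫ t in Ioc a b, v' t)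
      = (∫ x in Ioc a b, B (u' x) (∫ t in Ioc a x, v' t))
        + ∫ y in Ioc a b, B (∫ t in Ioc a y, u' t) (v' y) := by
  set μ := volume.restrict (Ioc a b) with hμ
  have hΦm : AEStronglyMeasurable (fun p : ℝ × ℝ => B (u' p.1) (v' p.2)) (μ.prod μ) :=
    B.aestronglyMeasurable_comp₂ hu.aestronglyMeasurable.comp_fst hv.aestronglyMeasurable.comp_snd
  have hΦi : Integrable (fun p : ℝ × ℝ => B (u' p.1) (v' p.2)) (μ.prod μ) := by
    refine Integrable.mono' ((hu.norm.mul_prod hv.norm).const_mul ‖B‖) hΦm ?_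
    refine Eventually.of_forall fun p => ?_
    simpa [mul_assoc] using B.le_opNorm₂ (u' p.1) (v' p.2)
  have hS : MeasurableSet {p : ℝ × ℝ | p.2 ≤ p.1} := measurableSet_le measurable_snd measurable_fst
  have hf1 : Integrable ({p : ℝ × ℝ | p.2 ≤ p.1}.indicator fun p => B (u' p.1) (v' p.2)) (μ.prod μ) :=
    hΦi.indicator hS
  have hf2 : Integrable ({p : ℝ × ℝ | p.2 ≤ p.1}ᶜ.indicator fun p => B (u' p.1) (v' p.2)) (μ.prod μ) :=
    hΦi.indicator hS.compl
  have hsplit : (∫ p, B (u' p.1) (v' p.2) ∂(μ.prod μ))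
      = (∫ p, ({p : ℝ × ℝ | p.2 ≤ p.1}.indicator fun p => B (u' p.1) (v' p.2)) p ∂(μ.prod μ))
        + ∫ p, ({p : ℝ × ℝ | p.2 ≤ p.1}ᶜ.indicator fun p => B (u' p.1) (v' p.2)) p ∂(μ.prod μ) := by
    rw [← integral_add hf1 hf2]
    refine integral_congr_ae (Eventually.of_forall fun p => ?_)
    by_cases h : p.2 ≤ p.1 <;> simp [Set.indicator_apply, h]
  have hLHS : (∫ p, B (u' p.1) (v' p.2) ∂(μ.prod μ)) = B (∫ t, u' t ∂μ) (∫ t, v' t ∂μ) := by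
    rw [integral_prod _ hΦi]
    have h1 : ∀ x, (∫ y, B (u' x) (v' y) ∂μ) = B (u' x) (∫ t, v' t ∂μ) :=
      fun x => ContinuousLinearMap.integral_comp_comm _ hv
    simp_rw [h1]
    have h2 : ∀ x, B (u' x) (∫ t, v' t ∂μ) = (B.flip (∫ t, v' t ∂μ)) (u' x) := fun _ => rfl
    simp_rw [h2]
    exact ContinuousLinearMap.integral_comp_comm _ hu
  have hof1 : (∫ p, ({p : ℝ × ℝ | p.2 ≤ p.1}.indicator fun p => B (u' p.1) (v' p.2)) p ∂(μ.prod μ))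
      = ∫ x in Ioc a b, B (u' x) (∫ t in Ioc a x, v' t) := by
    rw [integral_prod _ hf1]
    refine integral_congr_ae ?_
    filter_upwards [ae_restrict_mem measurableSet_Ioc] with x hx
    have h1 : (fun y => ({p : ℝ × ℝ | p.2 ≤ p.1}.indicator (fun p => B (u' p.1) (v' p.2))) (x, y))
        = (Iic x).indicator (fun y => B (u' x) (v' y)) := by
      funext y; by_cases h : y ≤ x <;> simp [Set.indicator_apply, h]
    rw [h1, integral_indicator measurableSet_Iic, hμ, Measure.restrict_restrict measurableSet_Iic]
    have h2 : Iic x ∩ Ioc a b = Ioc a x := by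
      ext y; simp only [mem_inter_iff, mem_Iic, mem_Ioc]
      exact ⟨fun ⟨h1', h2', _⟩ => ⟨h2', h1'⟩, fun ⟨h1', h2'⟩ => ⟨h2', h1', h2'.trans hx.2⟩⟩
    rw [h2]
    exact ContinuousLinearMap.integral_comp_comm _ (hv.mono_set (Ioc_subset_Ioc_right hx.2))
  have hof2 : (∫ p, ({p : ℝ × ℝ | p.2 ≤ p.1}ᶜ.indicator fun p => B (u' p.1) (v' p.2)) p ∂(μ.prod μ))
      = ∫ y in Ioc a b, B (∫ t in Ioc a y, u' t) (v' y) := by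
    rw [integral_prod_symm _ hf2]
    refine integral_congr_ae ?_
    filter_upwards [ae_restrict_mem measurableSet_Ioc] with y hy
    have h1 : (fun x => ({p : ℝ × ℝ | p.2 ≤ p.1}ᶜ.indicator (fun p => B (u' p.1) (v' p.2))) (x, y))
        = (Iio y).indicator (fun x => B (u' x) (v' y)) := by
      funext x; by_cases h : y ≤ x <;> simp [Set.indicator_apply, h, not_le, lt_iff_not_ge]
    rw [h1, integral_indicator measurableSet_Iio, hμ, Measure.restrict_restrict measurableSet_Iio]
    have h2 : Iio y ∩ Ioc a b = Ioo a y := by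
      ext x; simp only [mem_inter_iff, mem_Iio, mem_Ioc, mem_Ioo]
      exact ⟨fun ⟨h1', h2', _⟩ => ⟨h2', h1'⟩, fun ⟨h1', h2'⟩ => ⟨h2', h1', h2'.le.trans hy.2⟩⟩
    rw [h2, ← integral_Ioc_eq_integral_Ioo]
    have h3 : (fun x => B (u' x) (v' y)) = fun x => (B.flip (v' y)) (u' x) := rfl
    rw [h3, ContinuousLinearMap.integral_comp_comm _ (hu.mono_set (Ioc_subset_Ioc_right hy.2))]
    rfl
  calc B (∫ t in Ioc a b, u' t) (∫ t in Ioc a b, v' t)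
      = ∫ p, B (u' p.1) (v' p.2) ∂(μ.prod μ) := hLHS.symm
    _ = _ := by rw [hsplit, hof1, hof2]


lemma bilin_ftc (B : E →L[ℝ] F →L[ℝ] G) {u : ℝ → E} {u' : ℝ → E} {v : ℝ → F} {v' : ℝ → F}
    {a b : ℝ} (hab : a ≤ b)
    (hu : IntegrableOn u' (Ioc a b)) (hv : IntegrableOn v' (Ioc a b))
    (hue : ∀ x ∈ Icc a b, u x = u a + ∫ t in Ioc a x, u' t)
    (hve : ∀ x ∈ Icc a b, v x = v a + ∫ t in Ioc a x, v' t) :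
    B (u b) (v b) - B (u a) (v a)
      = (∫ x in Ioc a b, B (u' x) (v x)) + ∫ x in Ioc a b, B (u x) (v' x) := by
  set U : ℝ → E := fun x => ∫ t in Ioc a x, u' t with hU
  set V : ℝ → F := fun x => ∫ t in Ioc a x, v' t with hV
  have hUc : ContinuousOn U (Icc a b) :=
    intervalIntegral.continuousOn_primitive ((integrableOn_Icc_iff_integrableOn_Ioc).2 hu)
  have hVc : ContinuousOn V (Icc a b) :=
    intervalIntegral.continuousOn_primitive ((integrableOn_Icc_iff_integrableOn_Ioc).2 hv)
  have hUm : AEStronglyMeasurable U (volume.restrict (Ioc a b)) :=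
    (hUc.mono Ioc_subset_Icc_self).aestronglyMeasurable measurableSet_Ioc
  have hVm : AEStronglyMeasurable V (volume.restrict (Ioc a b)) :=
    (hVc.mono Ioc_subset_Icc_self).aestronglyMeasurable measurableSet_Ioc
  have hVbd : ∀ x ∈ Ioc a b, ‖V x‖ ≤ ∫ t in Ioc a b, ‖v' t‖ := by
    intro x hx
    calc ‖V x‖ ≤ ∫ t in Ioc a x, ‖v' t‖ := norm_integral_le_integral_norm _
      _ ≤ ∫ t in Ioc a b, ‖v' t‖ :=
        setIntegral_mono_set hv.norm (Eventually.of_forall fun t => norm_nonneg _)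
          (HasSubset.Subset.eventuallyLE (Ioc_subset_Ioc_right hx.2))
  have hUbd : ∀ x ∈ Ioc a b, ‖U x‖ ≤ ∫ t in Ioc a b, ‖u' t‖ := by
    intro x hx
    calc ‖U x‖ ≤ ∫ t in Ioc a x, ‖u' t‖ := norm_integral_le_integral_norm _
      _ ≤ ∫ t in Ioc a b, ‖u' t‖ :=
        setIntegral_mono_set hu.norm (Eventually.of_forall fun t => norm_nonneg _)
          (HasSubset.Subset.eventuallyLE (Ioc_subset_Ioc_right hx.2))
  have int2 : IntegrableOn (fun x => B (u' x) (V x)) (Ioc a b) := by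
    refine Integrable.mono' (hu.norm.const_mul (‖B‖ * ∫ t in Ioc a b, ‖v' t‖))
      (B.aestronglyMeasurable_comp₂ hu.aestronglyMeasurable hVm) ?_
    filter_upwards [ae_restrict_mem measurableSet_Ioc] with x hx
    calc ‖B (u' x) (V x)‖ ≤ ‖B‖ * ‖u' x‖ * ‖V x‖ := B.le_opNorm₂ _ _
      _ ≤ ‖B‖ * ‖u' x‖ * ∫ t in Ioc a b, ‖v' t‖ := by
          refine mul_le_mul_of_nonneg_left (hVbd x hx) (by positivity)
      _ = (‖B‖ * ∫ t in Ioc a b, ‖v' t‖) * ‖u' x‖ := by ring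
  have int4 : IntegrableOn (fun x => B (U x) (v' x)) (Ioc a b) := by
    refine Integrable.mono' (hv.norm.const_mul (‖B‖ * ∫ t in Ioc a b, ‖u' t‖))
      (B.aestronglyMeasurable_comp₂ hUm hv.aestronglyMeasurable) ?_
    filter_upwards [ae_restrict_mem measurableSet_Ioc] with x hx
    calc ‖B (U x) (v' x)‖ ≤ ‖B‖ * ‖U x‖ * ‖v' x‖ := B.le_opNorm₂ _ _
      _ ≤ ‖B‖ * (∫ t in Ioc a b, ‖u' t‖) * ‖v' x‖ := by
          refine mul_le_mul_of_nonneg_right (mul_le_mul_of_nonneg_left (hUbd x hx) (by positivity)) (norm_nonneg _)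
      _ = (‖B‖ * ∫ t in Ioc a b, ‖u' t‖) * ‖v' x‖ := by ring
  have int1 : IntegrableOn (fun x => B (u' x) (v a)) (Ioc a b) :=
    (B.flip (v a)).integrable_comp hu
  have int3 : IntegrableOn (fun x => B (u a) (v' x)) (Ioc a b) :=
    (B (u a)).integrable_comp hv
  have e1 : (∫ x in Ioc a b, B (u' x) (v x))
      = B (U b) (v a) + ∫ x in Ioc a b, B (u' x) (V x) := by
    have : (∫ x in Ioc a b, B (u' x) (v x))
        = ∫ x in Ioc a b, (B (u' x) (v a) + B (u' x) (V x)) := by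
      refine integral_congr_ae ?_
      filter_upwards [ae_restrict_mem measurableSet_Ioc] with x hx
      rw [hve x (Ioc_subset_Icc_self hx), map_add]
    rw [this, integral_add int1 int2]
    congr 1
    have h3 : (fun x => B (u' x) (v a)) = fun x => (B.flip (v a)) (u' x) := rfl
    rw [h3, ContinuousLinearMap.integral_comp_comm _ hu]
    rfl
  have e2 : (∫ x in Ioc a b, B (u x) (v' x))
      = B (u a) (V b) + ∫ x in Ioc a b, B (U x) (v' x) := by
    have : (∫ x in Ioc a b, B (u x) (v' x))
        = ∫ x in Ioc a b, (B (u a) (v' x) + B (U x) (v' x)) := by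
      refine integral_congr_ae ?_
      filter_upwards [ae_restrict_mem measurableSet_Ioc] with x hx
      rw [hue x (Ioc_subset_Icc_self hx), map_add]
      simp
      rfl
    rw [this, integral_add int3 int4]
    congr 1
    exact ContinuousLinearMap.integral_comp_comm _ hv
  have hcore := bilin_core B hu hv
  have hub : u b = u a + U b := hue b (right_mem_Icc.2 hab)
  have hvb : v b = v a + V b := hve b (right_mem_Icc.2 hab)
  have hcore' : B (U b) (V b)
      = (∫ x in Ioc a b, B (u' x) (V x)) + ∫ y in Ioc a b, B (U y) (v' y) := hcore
  have expand : B (u a + U b) (v a + V b)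
      = B (u a) (v a) + B (u a) (V b) + B (U b) (v a) + B (U b) (V b) := by
    simp only [map_add, ContinuousLinearMap.add_apply]
    abel
  rw [e1, e2, hub, hvb, expand, hcore']
  abel

end Bilin

lemma tendsto_primitive_zero {h : ℝ → ℝ} (hint : IntegrableOn h (Ioi 0))
    (hpos : ∀ s ∈ Ioi (0:ℝ), 0 ≤ h s) :
    Tendsto (fun a => ∫ s in Ioc 0 a, h s) (𝓝[>] (0:ℝ)) (𝓝 0) := by
  have hnn : ∀ a : ℝ, 0 ≤ ∫ s in Ioc 0 a, h s := fun a =>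
    setIntegral_nonneg measurableSet_Ioc (fun s hs => hpos s hs.1)
  have hmono : ∀ a b : ℝ, a ≤ b → (∫ s in Ioc 0 a, h s) ≤ ∫ s in Ioc 0 b, h s := by
    intro a b hab
    refine setIntegral_mono_set (hint.mono_set Ioc_subset_Ioi_self) ?_
      (HasSubset.Subset.eventuallyLE (Ioc_subset_Ioc_right hab))
    filter_upwards [ae_restrict_mem measurableSet_Ioc] with s hs using hpos s hs.1
  have hiInter : ⋂ n : ℕ, Ioc (0:ℝ) (((n:ℝ)+1)⁻¹) = ∅ := by
    ext x
    simp only [mem_iInter, mem_Ioc, mem_empty_iff_false, iff_false, not_forall]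
    by_cases hx : 0 < x
    · obtain ⟨n, hn⟩ := exists_nat_gt x⁻¹
      refine ⟨n, fun hmem => ?_⟩
      have h1 : x⁻¹ < (n:ℝ)+1 := hn.trans (by linarith)
      have h2 : ((n:ℝ)+1)⁻¹ < x := by
        rw [inv_lt_comm₀ (by positivity) hx]
        exact h1
      exact absurd hmem.2 (not_le.2 h2)
    · exact ⟨0, fun hmem => hx hmem.1⟩
  have hseq : Tendsto (fun n : ℕ => ∫ s in Ioc (0:ℝ) (((n:ℝ)+1)⁻¹), h s) atTop (𝓝 0) := by
    have := tendsto_setIntegral_of_antitone (f := h) (μ := volume)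
      (s := fun n : ℕ => Ioc (0:ℝ) (((n:ℝ)+1)⁻¹)) (fun n => measurableSet_Ioc)
      (fun m n hmn => Ioc_subset_Ioc_right (by
        apply inv_anti₀ (by positivity)
        exact_mod_cast by exact_mod_cast add_le_add_left (Nat.cast_le.2 hmn) 1))
      ⟨0, hint.mono_set Ioc_subset_Ioi_self⟩
    rwa [hiInter, setIntegral_empty] at this
  rw [tendsto_order]
  constructor
  · intro c hc
    exact Eventually.of_forall fun a => lt_of_lt_of_le hc (hnn a)
  · intro c hc
    obtain ⟨n, hn⟩ := (hseq.eventually_lt_const hc).exists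
    filter_upwards [Ioo_mem_nhdsGT_of_mem (⟨le_refl (0:ℝ), by positivity⟩ :
      (0:ℝ) ∈ Ico (0:ℝ) (((n:ℝ)+1)⁻¹))] with a ha
    exact lt_of_le_of_lt (hmono a _ ha.2.le) hn

set_option maxHeartbeats 2000000

/-- dissipativity of `S = T - ωI`, `Tη = -η'`, `ω = (α-δ)/2`, on the
weighted space `M = L²_{-g'}((0,∞); E)`:
`⟨Sη, η⟩_M ≤ 0`, i.e. `⟨Tη, η⟩_M ≤ ω ‖η‖_M²`. -/
theorem mgt_dissipativity
    {E : Type*} [NormedAddCommGroup E] [InnerProductSpace ℝ E] [CompleteSpace E]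
    (α δ : ℝ) (hδ : 0 < δ) (hδα : δ < α)
    (g g' g'' : ℝ → ℝ)
    (hgderiv : ∀ s ∈ Set.Ioi (0 : ℝ), HasDerivAt g (g' s) s)
    (hg'deriv : ∀ᵐ s : ℝ, s ∈ Set.Ioi (0 : ℝ) → HasDerivAt g' (g'' s) s)
    (hg''loc : ∀ a b : ℝ, 0 < a → a ≤ b → IntervalIntegrable g'' MeasureTheory.volume a b)
    (hFTCg' : ∀ a b : ℝ, 0 < a → a ≤ b → g' b - g' a = ∫ y in a..b, g'' y)
    (hg_int : IntegrableOn g (Set.Ioi 0))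
    (hg'_int : IntegrableOn g' (Set.Ioi 0))
    (hg_nonneg : ∀ s ∈ Set.Ioi (0 : ℝ), 0 ≤ g s)
    (hg'_nonpos : ∀ s ∈ Set.Ioi (0 : ℝ), g' s ≤ 0)
    (hg3 : ∀ᵐ s : ℝ, s ∈ Set.Ioi (0 : ℝ) → (α - δ) * g' s - g'' s ≤ 0)
    (η η' : ℝ → E)
    (hηderiv : ∀ᵐ s : ℝ, s ∈ Set.Ioi (0 : ℝ) → HasDerivAt η (η' s) s)
    (hη'loc : ∀ a b : ℝ, 0 < a → a ≤ b → IntervalIntegrable η' MeasureTheory.volume a b)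
    (hηFTC : ∀ a b : ℝ, 0 < a → a ≤ b → η b - η a = ∫ y in a..b, η' y)
    (hη0 : Tendsto η (nhdsWithin 0 (Set.Ioi 0)) (nhds 0))
    (hη_int : IntegrableOn (fun s => -g' s * ‖η s‖ ^ 2) (Set.Ioi 0))
    (hη'_int : IntegrableOn (fun s => -g' s * ‖η' s‖ ^ 2) (Set.Ioi 0)) :
    (∫ s in Set.Ioi (0 : ℝ),
        -g' s * (inner ℝ (-η' s - ((α - δ) / 2) • η s) (η s) : ℝ)) ≤ 0 ∧
    (∫ s in Set.Ioi (0 : ℝ), -g' s * (inner ℝ (-η' s) (η s) : ℝ))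
      ≤ ((α - δ) / 2) * ∫ s in Set.Ioi (0 : ℝ), -g' s * ‖η s‖ ^ 2 := by
  have hαδ : (0:ℝ) < α - δ := by linarith
  set f : ℝ → ℝ := fun s => -g' s * (inner ℝ (-η' s - ((α - δ) / 2) • η s) (η s) : ℝ) with hf
  have hfid : ∀ s, f s = (1/2) * (g' s * (2 * (inner ℝ (η' s) (η s) : ℝ)))
      + ((α-δ)/2) * (g' s * ‖η s‖^2) := by
    intro s
    simp only [hf, inner_sub_left, inner_neg_left, real_inner_smul_left,
      real_inner_self_eq_norm_sq]
    ring
  have hηcont : ContinuousOn η (Set.Ioi 0) := by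
    intro x hx
    have hx0 : (0:ℝ) < x := hx
    have hc : (0:ℝ) < x/2 := by positivity
    have hint : IntegrableOn η' (Icc (x/2) (x+1)) :=
      (integrableOn_Icc_iff_integrableOn_Ioc).2 (hη'loc _ _ hc (by linarith)).1
    have hrep : ∀ y ∈ Icc (x/2) (x+1), η y = η (x/2) + ∫ t in Ioc (x/2) y, η' t := by
      intro y hy
      have h1 := hηFTC (x/2) y hc hy.1
      rw [intervalIntegral.integral_of_le hy.1] at h1
      rw [← h1]; abel
    have hcont2 : ContinuousOn (fun y => η (x/2) + ∫ t in Ioc (x/2) y, η' t) (Icc (x/2) (x+1)) :=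
      continuousOn_const.add (intervalIntegral.continuousOn_primitive hint)
    have hcont3 : ContinuousOn η (Icc (x/2) (x+1)) := hcont2.congr hrep
    have hmem : Icc (x/2) (x+1) ∈ 𝓝 x := Icc_mem_nhds (by linarith) (by linarith)
    exact (hcont3.continuousAt hmem).continuousWithinAt
  have hg'cont : ContinuousOn g' (Set.Ioi 0) := by
    intro x hx
    have hx0 : (0:ℝ) < x := hx
    have hc : (0:ℝ) < x/2 := by positivity
    have hint : IntegrableOn g'' (Icc (x/2) (x+1)) :=
      (integrableOn_Icc_iff_integrableOn_Ioc).2 (hg''loc _ _ hc (by linarith)).1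
    have hrep : ∀ y ∈ Icc (x/2) (x+1), g' y = g' (x/2) + ∫ t in Ioc (x/2) y, g'' t := by
      intro y hy
      have h1 := hFTCg' (x/2) y hc hy.1
      rw [intervalIntegral.integral_of_le hy.1] at h1
      linarith
    have hcont2 : ContinuousOn (fun y => g' (x/2) + ∫ t in Ioc (x/2) y, g'' t) (Icc (x/2) (x+1)) :=
      continuousOn_const.add (intervalIntegral.continuousOn_primitive hint)
    have hcont3 : ContinuousOn g' (Icc (x/2) (x+1)) := hcont2.congr hrep
    have hmem : Icc (x/2) (x+1) ∈ 𝓝 x := Icc_mem_nhds (by linarith) (by linarith)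
    exact (hcont3.continuousAt hmem).continuousWithinAt
  have hηmeas : AEStronglyMeasurable η (volume.restrict (Set.Ioi 0)) :=
    hηcont.aestronglyMeasurable measurableSet_Ioi
  have hg'meas : AEStronglyMeasurable g' (volume.restrict (Set.Ioi 0)) :=
    hg'cont.aestronglyMeasurable measurableSet_Ioi
  have hcover : ⋃ n : ℕ, Set.Ioc (((n:ℝ)+1)⁻¹) ((n:ℝ)+1) = Set.Ioi 0 := by
    ext x
    simp only [mem_iUnion, mem_Ioc, mem_Ioi]
    constructor
    · rintro ⟨n, h1, _⟩; exact lt_trans (by positivity) h1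
    · intro hx
      obtain ⟨n, hn⟩ := exists_nat_gt (max x⁻¹ x)
      have hn1 : x⁻¹ < (n:ℝ)+1 := lt_of_le_of_lt (le_max_left _ _) (hn.trans (by linarith))
      have hn2 : x ≤ (n:ℝ)+1 := le_trans (le_max_right x⁻¹ x) (hn.le.trans (by linarith))
      exact ⟨n, (inv_lt_comm₀ (by positivity) hx).2 hn1, hn2⟩
  have hη'meas : AEStronglyMeasurable η' (volume.restrict (Set.Ioi 0)) := by
    rw [← hcover, aestronglyMeasurable_iUnion_iff]
    exact fun n => (hη'loc _ _ (by positivity) (by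
      have h1 : (1:ℝ) ≤ (n:ℝ)+1 := by
        have : (0:ℝ) ≤ (n:ℝ) := Nat.cast_nonneg n; linarith
      calc (((n:ℝ)+1))⁻¹ ≤ 1 := by rw [inv_le_one_iff₀]; right; exact h1
        _ ≤ (n:ℝ)+1 := h1)).1.aestronglyMeasurable
  have hfmeas : AEStronglyMeasurable f (volume.restrict (Set.Ioi 0)) := by
    refine (hg'meas.neg.mul ?_)
    exact AEStronglyMeasurable.inner ((hη'meas.neg).sub (hηmeas.const_smul _)) hηmeas
  have hf_int : IntegrableOn f (Set.Ioi 0) := by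
    refine Integrable.mono' (((hη'_int.add hη_int).const_mul (1/2)).add
      (hη_int.const_mul ((α-δ)/2))) hfmeas ?_
    filter_upwards [ae_restrict_mem measurableSet_Ioi] with s hs
    have hg0 : 0 ≤ -g' s := neg_nonneg.2 (hg'_nonpos s hs)
    have hip := abs_le.1 (abs_real_inner_le_norm (η' s) (η s))
    have h1 : |f s| ≤ -g' s * (‖η' s‖ * ‖η s‖) + ((α-δ)/2) * (-g' s * ‖η s‖^2) := by
      rw [hfid s, abs_le]
      have hb1 : 0 ≤ (-g' s) * (‖η' s‖ * ‖η s‖ - (inner ℝ (η' s) (η s) : ℝ)) :=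
        mul_nonneg hg0 (by linarith [hip.2])
      have hb2 : 0 ≤ (-g' s) * (‖η' s‖ * ‖η s‖ + (inner ℝ (η' s) (η s) : ℝ)) :=
        mul_nonneg hg0 (by linarith [hip.1])
      have hb3 : 0 ≤ (-g' s) * ‖η s‖^2 := mul_nonneg hg0 (by positivity)
      constructor <;> nlinarith [hb1, hb2, hb3]
    rw [Real.norm_eq_abs]
    refine h1.trans ?_
    have hb4 : 0 ≤ (-g' s) * (‖η' s‖ - ‖η s‖)^2 := mul_nonneg hg0 (sq_nonneg _)
    simp only [Pi.add_apply]
    nlinarith [hb4]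
  have key : ∀ a b : ℝ, 0 < a → a ≤ b →
      (∫ s in Set.Ioc a b, f s) ≤ (1/2) * (-g' a * ‖η a‖^2) := by
    intro a b ha hab
    have hb : (0:ℝ) < b := lt_of_lt_of_le ha hab
    have hIccIoi : Icc a b ⊆ Ioi 0 := fun x hx => lt_of_lt_of_le ha hx.1
    have hIocIoi : Ioc a b ⊆ Ioi 0 := fun x hx => lt_trans ha hx.1
    have hη'ab : IntegrableOn η' (Ioc a b) := (hη'loc a b ha hab).1
    have hg''ab : IntegrableOn g'' (Ioc a b) := (hg''loc a b ha hab).1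
    have hηe : ∀ x ∈ Icc a b, η x = η a + ∫ t in Ioc a x, η' t := by
      intro x hx
      have h1 := hηFTC a x ha hx.1
      rw [intervalIntegral.integral_of_le hx.1] at h1
      rw [← h1]; abel
    have hφe : ∀ x ∈ Icc a b, ‖η x‖^2
        = ‖η a‖^2 + ∫ t in Ioc a x, 2 * (inner ℝ (η' t) (η t) : ℝ) := by
      intro x hx
      have hx0 : a ≤ x := hx.1
      have h := bilin_ftc (innerSL ℝ (E := E)) hx0 ((hη'loc a x ha hx0).1) ((hη'loc a x ha hx0).1)
        (fun y hy => hηe y ⟨hy.1, hy.2.trans hx.2⟩) (fun y hy => hηe y ⟨hy.1, hy.2.trans hx.2⟩)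
      have h' : (inner ℝ (η x) (η x) : ℝ) - (inner ℝ (η a) (η a) : ℝ)
          = (∫ t in Ioc a x, (inner ℝ (η' t) (η t) : ℝ))
            + ∫ t in Ioc a x, (inner ℝ (η t) (η' t) : ℝ) := h
      clear h
      have hsymm : (∫ t in Ioc a x, (inner ℝ (η t) (η' t) : ℝ))
          = ∫ t in Ioc a x, (inner ℝ (η' t) (η t) : ℝ) :=
        integral_congr_ae (Eventually.of_forall fun t => real_inner_comm _ _)
      rw [hsymm, real_inner_self_eq_norm_sq, real_inner_self_eq_norm_sq] at h'
      rename' h' => h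
      have h2 : (∫ t in Ioc a x, 2 * (inner ℝ (η' t) (η t) : ℝ))
          = 2 * ∫ t in Ioc a x, (inner ℝ (η' t) (η t) : ℝ) := integral_const_mul _ _
      rw [h2]; linarith
    have hηcIcc : ContinuousOn η (Icc a b) := hηcont.mono hIccIoi
    obtain ⟨Cη, hCη⟩ := isCompact_Icc.exists_bound_of_continuousOn hηcIcc
    have hg'cIcc : ContinuousOn g' (Icc a b) := hg'cont.mono hIccIoi
    obtain ⟨Cg, hCg⟩ := isCompact_Icc.exists_bound_of_continuousOn hg'cIcc
    have hη'm2 : AEStronglyMeasurable η' (volume.restrict (Ioc a b)) :=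
      hη'meas.mono_measure (Measure.restrict_mono hIocIoi le_rfl)
    have hηm2 : AEStronglyMeasurable η (volume.restrict (Ioc a b)) :=
      (hηcIcc.mono Ioc_subset_Icc_self).aestronglyMeasurable measurableSet_Ioc
    have hg'm2 : AEStronglyMeasurable g' (volume.restrict (Ioc a b)) :=
      (hg'cIcc.mono Ioc_subset_Icc_self).aestronglyMeasurable measurableSet_Ioc
    have hφm2 : AEStronglyMeasurable (fun x => ‖η x‖^2) (volume.restrict (Ioc a b)) :=
      (hηm2.norm.mul hηm2.norm).congr (Eventually.of_forall fun x => by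
        show ‖η x‖ * ‖η x‖ = ‖η x‖^2; ring)
    have hψmeas : AEStronglyMeasurable (fun t => 2 * (inner ℝ (η' t) (η t) : ℝ))
        (volume.restrict (Ioc a b)) := (hη'm2.inner hηm2).const_mul 2
    have hψ_int : IntegrableOn (fun t => 2 * (inner ℝ (η' t) (η t) : ℝ)) (Ioc a b) := by
      refine Integrable.mono' (hη'ab.norm.const_mul (2*Cη)) hψmeas ?_
      filter_upwards [ae_restrict_mem measurableSet_Ioc] with t ht
      rw [Real.norm_eq_abs, abs_mul]
      have h1 := abs_real_inner_le_norm (η' t) (η t)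
      have h2 := hCη t (Ioc_subset_Icc_self ht)
      have h3 : (0:ℝ) ≤ ‖η' t‖ := norm_nonneg _
      have h4 : |(2:ℝ)| = 2 := by norm_num
      rw [h4]
      nlinarith [abs_nonneg (inner ℝ (η' t) (η t) : ℝ), norm_nonneg (η t)]
    have hg'e : ∀ x ∈ Icc a b, g' x = g' a + ∫ t in Ioc a x, g'' t := by
      intro x hx
      have h1 := hFTCg' a x ha hx.1
      rw [intervalIntegral.integral_of_le hx.1] at h1
      linarith
    have hmul := bilin_ftc (ContinuousLinearMap.mul ℝ ℝ) hab hg''ab hψ_int hg'e hφe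
    simp only [ContinuousLinearMap.mul_apply'] at hmul
    have ig'φ : IntegrableOn (fun x => g' x * ‖η x‖^2) (Ioc a b) := by
      refine ((hη_int.mono_set hIocIoi).neg).congr (Eventually.of_forall fun x => by
        show -(-g' x * ‖η x‖^2) = g' x * ‖η x‖^2; ring)
    have ig''φ : IntegrableOn (fun x => g'' x * ‖η x‖^2) (Ioc a b) := by
      refine Integrable.mono' (hg''ab.norm.const_mul (Cη^2))
        (hg''ab.aestronglyMeasurable.mul hφm2) ?_
      filter_upwards [ae_restrict_mem measurableSet_Ioc] with x hx
      rw [Real.norm_eq_abs, abs_mul]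
      have h1 := hCη x (Ioc_subset_Icc_self hx)
      have h2 : |‖η x‖^2| = ‖η x‖^2 := abs_of_nonneg (by positivity)
      rw [h2, Real.norm_eq_abs]
      have h3 : 0 ≤ |g'' x| * ((Cη - ‖η x‖) * (Cη + ‖η x‖)) :=
        mul_nonneg (abs_nonneg _) (mul_nonneg (by linarith) (by linarith [norm_nonneg (η x)]))
      nlinarith [h3]
    have ig'ψ : IntegrableOn (fun x => g' x * (2 * (inner ℝ (η' x) (η x) : ℝ))) (Ioc a b) := by
      refine Integrable.mono' (hψ_int.norm.const_mul Cg) (hg'm2.mul hψmeas) ?_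
      filter_upwards [ae_restrict_mem measurableSet_Ioc] with x hx
      rw [Real.norm_eq_abs, abs_mul]
      have h1 := hCg x (Ioc_subset_Icc_self hx)
      rw [Real.norm_eq_abs] at h1
      have h2 : (0:ℝ) ≤ |2 * (inner ℝ (η' x) (η x) : ℝ)| := abs_nonneg _
      rw [Real.norm_eq_abs]
      nlinarith [abs_nonneg (g' x)]
    have hsplit : (∫ s in Set.Ioc a b, f s)
        = (1/2) * (∫ x in Ioc a b, g' x * (2 * (inner ℝ (η' x) (η x) : ℝ)))
          + ((α-δ)/2) * (∫ x in Ioc a b, g' x * ‖η x‖^2) := by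
      rw [← integral_const_mul, ← integral_const_mul,
        ← integral_add (ig'ψ.const_mul _) (ig'φ.const_mul _)]
      exact integral_congr_ae (Eventually.of_forall fun s => hfid s)
    have hcomb : ((α-δ)/2) * (∫ x in Ioc a b, g' x * ‖η x‖^2)
          - (1/2) * (∫ x in Ioc a b, g'' x * ‖η x‖^2)
        = (1/2) * ∫ x in Ioc a b, ((α-δ) * g' x - g'' x) * ‖η x‖^2 := by
      have e1 : (∫ x in Ioc a b, ((α-δ) * g' x - g'' x) * ‖η x‖^2)
          = ∫ x in Ioc a b, ((α-δ) * (g' x * ‖η x‖^2) - g'' x * ‖η x‖^2) :=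
        integral_congr_ae (Eventually.of_forall fun x => by ring)
      rw [e1, integral_sub (ig'φ.const_mul _) ig''φ, integral_const_mul]
      ring
    have hint_nonpos : (∫ x in Ioc a b, ((α-δ) * g' x - g'' x) * ‖η x‖^2) ≤ 0 := by
      refine integral_nonpos_of_ae ?_
      filter_upwards [ae_restrict_mem measurableSet_Ioc, ae_restrict_of_ae hg3] with x hx hP
      have h1 : (α-δ) * g' x - g'' x ≤ 0 := hP (hIocIoi hx)
      exact mul_nonpos_iff.2 (Or.inr ⟨h1, by positivity⟩)
    have hend : g' b * ‖η b‖^2 ≤ 0 := by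
      have h1 : g' b ≤ 0 := hg'_nonpos b hb
      exact mul_nonpos_iff.2 (Or.inr ⟨h1, by positivity⟩)
    rw [hsplit]
    linarith [hmul, hcomb, hint_nonpos, hend]

  have hBtend : Tendsto (fun a => -g' a * ‖η a‖^2) (𝓝[>](0:ℝ)) (𝓝 0) := by
    set Gf : ℝ → ℝ := fun x => ∫ s in Ioc 0 x, -g' s with hGf
    set Ef : ℝ → ℝ := fun x => ∫ s in Ioc 0 x, (-g' s * ‖η' s‖^2) with hEf
    have hg'Ioi : IntegrableOn (fun s => -g' s) (Ioi 0) := hg'_int.neg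
    have hGtend : Tendsto Gf (𝓝[>](0:ℝ)) (𝓝 0) :=
      tendsto_primitive_zero hg'Ioi (fun s hs => neg_nonneg.2 (hg'_nonpos s hs))
    have hEtend : Tendsto Ef (𝓝[>](0:ℝ)) (𝓝 0) :=
      tendsto_primitive_zero hη'_int
        (fun s hs => mul_nonneg (neg_nonneg.2 (hg'_nonpos s hs)) (by positivity))
    have hφtend : Tendsto (fun x => ‖η x‖^2) (𝓝[>](0:ℝ)) (𝓝 0) := by
      have := (hη0.norm).pow 2
      simpa using this
    have hGnn : ∀ x : ℝ, 0 ≤ Gf x := fun x => setIntegral_nonneg measurableSet_Ioc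
      (fun s hs => neg_nonneg.2 (hg'_nonpos s hs.1))
    have hEnn : ∀ x : ℝ, 0 ≤ Ef x := fun x => setIntegral_nonneg measurableSet_Ioc
      (fun s hs => mul_nonneg (neg_nonneg.2 (hg'_nonpos s hs.1)) (by positivity))
    have hbound : ∀ a ∈ Ioi (0:ℝ), -g' a * ‖η a‖^2
        ≤ 2*((α-δ)*Gf a)*‖η a‖^2 + 2*a*Ef a := by
      intro a ha
      have ha0 : (0:ℝ) < a := ha
      have hm0 : 0 ≤ -g' a := neg_nonneg.2 (hg'_nonpos a ha)
      have hc0 : 0 ≤ (α-δ)*Gf a := mul_nonneg (le_of_lt hαδ) (hGnn a)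
      have hφ0 : (0:ℝ) ≤ ‖η a‖^2 := by positivity
      by_cases hcase : -g' a ≤ 2*((α-δ)*Gf a)
      · have h2 : 0 ≤ 2*a*Ef a := by nlinarith [hEnn a]
        nlinarith [mul_le_mul_of_nonneg_right hcase hφ0]
      · push_neg at hcase
        have hmpos : 0 < -g' a := lt_of_le_of_lt (by linarith) hcase
        have hmne : -g' a ≠ 0 := ne_of_gt hmpos
        have hgne : g' a ≠ 0 := fun hh => hmne (by rw [hh]; ring)
        have hlow : ∀ s ∈ Ioc (0:ℝ) a, -g' a/2 ≤ -g' s := by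
          intro s hs
          have hs0 : 0 < s := hs.1
          have hsa : s ≤ a := hs.2
          have hftc := hFTCg' s a hs0 hsa
          rw [intervalIntegral.integral_of_le hsa] at hftc
          have hg'sa : IntegrableOn g' (Ioc s a) :=
            hg'_int.mono_set (fun x hx => lt_trans hs0 hx.1)
          have hmono1 : (∫ t in Ioc s a, (α-δ) * g' t) ≤ ∫ t in Ioc s a, g'' t := by
            refine setIntegral_mono_ae_restrict (hg'sa.const_mul _) ((hg''loc s a hs0 hsa).1) ?_
            filter_upwards [ae_restrict_mem measurableSet_Ioc, ae_restrict_of_ae hg3] with x hx hP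
            have := hP (lt_trans hs0 hx.1)
            linarith
          have hmono2 : (∫ t in Ioc s a, -g' t) ≤ Gf a := by
            refine setIntegral_mono_set (hg'Ioi.mono_set Ioc_subset_Ioi_self) ?_
              (HasSubset.Subset.eventuallyLE (Ioc_subset_Ioc_left hs0.le))
            filter_upwards [ae_restrict_mem measurableSet_Ioc] with x hx
            exact neg_nonneg.2 (hg'_nonpos x hx.1)
          have e2 : (∫ t in Ioc s a, (α-δ) * g' t) = -((α-δ) * ∫ t in Ioc s a, -g' t) := by
            rw [integral_const_mul]
            have e3 : (∫ t in Ioc s a, g' t) = -∫ t in Ioc s a, -g' t := by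
              rw [integral_neg]; ring
            rw [e3]; ring
          have hchain : -((α-δ)*Gf a) ≤ g' a - g' s := by
            rw [hftc]
            calc -((α-δ)*Gf a) ≤ -((α-δ) * ∫ t in Ioc s a, -g' t) := by nlinarith [hmono2]
              _ = ∫ t in Ioc s a, (α-δ) * g' t := e2.symm
              _ ≤ ∫ t in Ioc s a, g'' t := hmono1
          linarith
        have hE_int : IntegrableOn (fun s => -g' s * ‖η' s‖^2) (Ioc 0 a) :=
          hη'_int.mono_set Ioc_subset_Ioi_self
        have hη'm0 : AEStronglyMeasurable η' (volume.restrict (Ioc 0 a)) :=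
          hη'meas.mono_measure (Measure.restrict_mono Ioc_subset_Ioi_self le_rfl)
        have hsq_meas : AEStronglyMeasurable (fun s => ‖η' s‖^2) (volume.restrict (Ioc 0 a)) :=
          (hη'm0.norm.mul hη'm0.norm).congr (Eventually.of_forall fun x => by
            show ‖η' x‖ * ‖η' x‖ = ‖η' x‖^2; ring)
        have hptw : ∀ᵐ s ∂(volume.restrict (Ioc 0 a)),
            ‖η' s‖^2 ≤ 2/(-g' a) * (-g' s * ‖η' s‖^2) := by
          filter_upwards [ae_restrict_mem measurableSet_Ioc] with s hs
          have h1 := hlow s hs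
          have h3 : -g' a/2 * ‖η' s‖^2 ≤ -g' s * ‖η' s‖^2 :=
            mul_le_mul_of_nonneg_right h1 (by positivity)
          calc ‖η' s‖^2 = 2/(-g' a) * (-g' a/2 * ‖η' s‖^2) := by
                field_simp [hgne]
            _ ≤ 2/(-g' a) * (-g' s * ‖η' s‖^2) :=
                mul_le_mul_of_nonneg_left h3 (div_nonneg (by norm_num) hmpos.le)
        have hsq_int : IntegrableOn (fun s => ‖η' s‖^2) (Ioc 0 a) := by
          refine Integrable.mono' (hE_int.const_mul (2/(-g' a))) hsq_meas ?_
          filter_upwards [hptw] with s hs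
          rwa [Real.norm_eq_abs, abs_of_nonneg (by positivity : (0:ℝ) ≤ ‖η' s‖^2)]
        have hsq_val : (∫ s in Ioc 0 a, ‖η' s‖^2) ≤ 2/(-g' a) * Ef a := by
          rw [hEf, ← integral_const_mul]
          exact setIntegral_mono_ae_restrict hsq_int (hE_int.const_mul _) hptw
        have hone : IntegrableOn (fun _ : ℝ => (1:ℝ)) (Ioc 0 a) :=
          integrableOn_const measure_Ioc_lt_top.ne
        have habs_int : IntegrableOn (fun s => ‖η' s‖) (Ioc 0 a) := by
          refine Integrable.mono' ((hone.add hsq_int).const_mul (1/2)) hη'm0.norm ?_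
          refine Eventually.of_forall fun s => ?_
          rw [norm_norm]
          have h1 : ‖η' s‖ ≤ 1/2 * (1 + ‖η' s‖^2) := by nlinarith [sq_nonneg (‖η' s‖ - 1)]
          simpa using h1
        have hInorm : ∀ lam : ℝ, 0 < lam →
            (∫ s in Ioc 0 a, ‖η' s‖) ≤ lam/(-g' a) * Ef a + a/(2*lam) := by
          intro lam hlam
          have hlamne : lam ≠ 0 := ne_of_gt hlam
          have hone' : IntegrableOn (fun _ : ℝ => 1/(2*lam)) (Ioc 0 a) :=
            integrableOn_const measure_Ioc_lt_top.ne
          have h1 : (∫ s in Ioc 0 a, ‖η' s‖)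
              ≤ ∫ s in Ioc 0 a, (lam/2 * ‖η' s‖^2 + 1/(2*lam)) := by
            refine setIntegral_mono_ae_restrict habs_int
              ((hsq_int.const_mul _).add hone') ?_
            refine Eventually.of_forall fun s => ?_
            have hkey : lam/2*‖η' s‖^2 + 1/(2*lam) - ‖η' s‖ = (lam*‖η' s‖ - 1)^2/(2*lam) := by
              field_simp [hlamne]
              ring
            have hnn : 0 ≤ (lam*‖η' s‖ - 1)^2/(2*lam) :=
              div_nonneg (sq_nonneg _) (by linarith)
            show ‖η' s‖ ≤ lam/2*‖η' s‖^2 + 1/(2*lam)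
            linarith [hkey, hnn]
          have h2 : (∫ s in Ioc 0 a, (lam/2 * ‖η' s‖^2 + 1/(2*lam)))
              = lam/2 * (∫ s in Ioc 0 a, ‖η' s‖^2) + (a - 0) * (1/(2*lam)) := by
            rw [integral_add (hsq_int.const_mul _) hone', integral_const_mul, setIntegral_const,
              Real.volume_real_Ioc_of_le (by linarith), smul_eq_mul]
          have h3 : lam/2 * (∫ s in Ioc 0 a, ‖η' s‖^2) ≤ lam/2 * (2/(-g' a) * Ef a) :=
            mul_le_mul_of_nonneg_left hsq_val (by linarith)
          have h4 : lam/2 * (2/(-g' a) * Ef a) = lam/(-g' a) * Ef a := by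
            field_simp [hgne]
          have h5 : (a - 0) * (1/(2*lam)) = a/(2*lam) := by
            field_simp
            ring
          calc (∫ s in Ioc 0 a, ‖η' s‖)
              ≤ lam/2 * (∫ s in Ioc 0 a, ‖η' s‖^2) + (a - 0) * (1/(2*lam)) := by rw [← h2]; exact h1
            _ ≤ lam/(-g' a) * Ef a + a/(2*lam) := by rw [← h4, ← h5] at *; linarith [h3]
        have hηa : ‖η a‖ ≤ ∫ s in Ioc 0 a, ‖η' s‖ := by
          have hstep : ∀ s ∈ Ioo (0:ℝ) a, ‖η a‖ ≤ ‖η s‖ + ∫ t in Ioc 0 a, ‖η' t‖ := by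
            intro s hs
            have h1 := hηFTC s a hs.1 hs.2.le
            rw [intervalIntegral.integral_of_le hs.2.le] at h1
            have h2 : η a = η s + ∫ t in Ioc s a, η' t := by rw [← h1]; abel
            have h3 : ‖η a‖ ≤ ‖η s‖ + ‖∫ t in Ioc s a, η' t‖ := by rw [h2]; exact norm_add_le _ _
            have h4 : ‖∫ t in Ioc s a, η' t‖ ≤ ∫ t in Ioc s a, ‖η' t‖ :=
              norm_integral_le_integral_norm _
            have h5 : (∫ t in Ioc s a, ‖η' t‖) ≤ ∫ t in Ioc 0 a, ‖η' t‖ :=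
              setIntegral_mono_set habs_int (Eventually.of_forall fun t => norm_nonneg _)
                (HasSubset.Subset.eventuallyLE (Ioc_subset_Ioc_left hs.1.le))
            linarith
          have htt : Tendsto (fun s => ‖η s‖ + ∫ t in Ioc 0 a, ‖η' t‖) (𝓝[>](0:ℝ))
              (𝓝 (‖(0:E)‖ + ∫ t in Ioc 0 a, ‖η' t‖)) := hη0.norm.add tendsto_const_nhds
          have hle := ge_of_tendsto htt (by
            filter_upwards [Ioo_mem_nhdsGT_of_mem
              (⟨le_refl (0:ℝ), ha0⟩ : (0:ℝ) ∈ Ico (0:ℝ) a)] with s hsm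
            exact hstep s hsm)
          simpa using hle
        have hφbound : ‖η a‖^2 ≤ 2*a*Ef a/(-g' a) := by
          rcases eq_or_lt_of_le (hEnn a) with hE0 | hEpos
          · have hzero : ‖η a‖ ≤ 0 := by
              by_contra hpos
              push_neg at hpos
              have hr := hηa.trans (hInorm (a/‖η a‖) (div_pos ha0 hpos))
              rw [← hE0] at hr
              have he : (a/‖η a‖)/(-g' a) * 0 + a/(2*(a/‖η a‖)) = ‖η a‖/2 := by
                rw [mul_zero, zero_add]
                field_simp [ha0.ne', hpos.ne']
              rw [he] at hr
              linarith
            have h0 : ‖η a‖ = 0 := le_antisymm hzero (norm_nonneg _)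
            rw [h0, ← hE0]
            simp
          · set lam := Real.sqrt (a*(-g' a)/(2*Ef a)) with hlamdef
            have hEne : Ef a ≠ 0 := ne_of_gt hEpos
            have hlam0 : 0 < lam := Real.sqrt_pos.2 (div_pos (mul_pos ha0 hmpos) (by linarith))
            have hlamne : lam ≠ 0 := ne_of_gt hlam0
            have hb1 := hηa.trans (hInorm lam hlam0)
            have hlamsq : lam^2 = a*(-g' a)/(2*Ef a) :=
              Real.sq_sqrt (div_nonneg (mul_nonneg ha0.le hmpos.le) (by linarith))
            have hX2 : (lam/(-g' a) * Ef a)^2 = a*Ef a/(2*(-g' a)) := by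
              have e1 : (lam/(-g' a) * Ef a)^2 = lam^2 * ((Ef a)^2/(-g' a)^2) := by ring
              rw [e1, hlamsq]
              field_simp [hgne, hEne]
            have hY2 : (a/(2*lam))^2 = a*Ef a/(2*(-g' a)) := by
              have e1 : (a/(2*lam))^2 = a^2/(4*lam^2) := by ring
              rw [e1, hlamsq]
              rw [div_eq_div_iff (by positivity) (by positivity)]
              field_simp
              ring
            have hXY : (lam/(-g' a) * Ef a) * (a/(2*lam)) = a*Ef a/(2*(-g' a)) := by
              field_simp [hgne, hlamne]
            have hXnn : 0 ≤ lam/(-g' a) * Ef a :=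
              mul_nonneg (div_nonneg hlam0.le hmpos.le) hEpos.le
            have hYnn : 0 ≤ a/(2*lam) := div_nonneg ha0.le (by linarith)
            have hquad : 2*a*Ef a/(-g' a) = 4*(a*Ef a/(2*(-g' a))) := by
              field_simp [hgne]
              ring
            rw [hquad]
            nlinarith [hb1, norm_nonneg (η a), hX2, hY2, hXY, hXnn, hYnn]
        have h5 : -g' a * ‖η a‖^2 ≤ -g' a * (2*a*Ef a/(-g' a)) :=
          mul_le_mul_of_nonneg_left hφbound hm0
        have h6 : -g' a * (2*a*Ef a/(-g' a)) = 2*a*Ef a := by field_simp [hgne]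
        nlinarith [mul_nonneg hc0 hφ0]
    have h1 : Tendsto (fun x : ℝ => x) (𝓝[>](0:ℝ)) (𝓝 0) :=
      tendsto_id.mono_left nhdsWithin_le_nhds
    have hup : Tendsto (fun x => 2*((α-δ)*Gf x)*‖η x‖^2 + 2*x*Ef x) (𝓝[>](0:ℝ)) (𝓝 0) := by
      have h2 := (((hGtend.const_mul (α-δ)).const_mul 2).mul hφtend).add
        ((h1.const_mul 2).mul hEtend)
      simpa [mul_assoc] using h2
    have hlow2 : ∀ᶠ x in 𝓝[>](0:ℝ), 0 ≤ -g' x * ‖η x‖^2 := by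
      filter_upwards [self_mem_nhdsWithin] with x hx
      exact mul_nonneg (neg_nonneg.2 (hg'_nonpos x hx)) (by positivity)
    have hup' : ∀ᶠ x in 𝓝[>](0:ℝ), -g' x * ‖η x‖^2 ≤ 2*((α-δ)*Gf x)*‖η x‖^2 + 2*x*Ef x := by
      filter_upwards [self_mem_nhdsWithin] with x hx using hbound x hx
    exact squeeze_zero' hlow2 hup' hup

  have main : (∫ s in Set.Ioi (0:ℝ), f s) ≤ 0 := by
    have hsets_mono : Monotone (fun n : ℕ => Set.Ioc (((n:ℝ)+1)⁻¹) ((n:ℝ)+1)) := by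
      intro m n hmn
      have h1 : ((m:ℝ)+1) ≤ ((n:ℝ)+1) := by
        have : (m:ℝ) ≤ (n:ℝ) := Nat.cast_le.2 hmn; linarith
      exact Set.Ioc_subset_Ioc (inv_anti₀ (by positivity) h1) h1
    have htend := tendsto_setIntegral_of_monotone (fun n => measurableSet_Ioc) hsets_mono
      (hcover ▸ hf_int)
    rw [hcover] at htend
    have hb : ∀ n : ℕ, (∫ s in Set.Ioc (((n:ℝ)+1)⁻¹) ((n:ℝ)+1), f s)
        ≤ (1/2) * (-g' (((n:ℝ)+1)⁻¹) * ‖η (((n:ℝ)+1)⁻¹)‖^2) := by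
      intro n
      refine key _ _ (by positivity) ?_
      have h1 : (1:ℝ) ≤ (n:ℝ)+1 := by
        have : (0:ℝ) ≤ (n:ℝ) := Nat.cast_nonneg n; linarith
      calc (((n:ℝ)+1))⁻¹ ≤ 1 := by
            rw [inv_le_one_iff₀]; right; exact h1
        _ ≤ (n:ℝ)+1 := h1
    have h1 : Tendsto (fun n : ℕ => (((n:ℝ)+1))⁻¹) atTop (𝓝[>] (0:ℝ)) := by
      rw [tendsto_nhdsWithin_iff]
      constructor
      · simpa only [one_div] using tendsto_one_div_add_atTop_nhds_zero_nat (𝕜 := ℝ)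
      · exact Eventually.of_forall fun n => show (((n:ℝ)+1))⁻¹ ∈ Ioi (0:ℝ) by
          simp only [mem_Ioi]; positivity
    have hseq0 : Tendsto (fun n : ℕ =>
        (1/2) * (-g' (((n:ℝ)+1)⁻¹) * ‖η (((n:ℝ)+1)⁻¹)‖^2)) atTop (𝓝 0) := by
      have := (hBtend.comp h1).const_mul (1/2)
      simpa using this
    exact le_of_tendsto_of_tendsto' htend hseq0 hb
  refine ⟨main, ?_⟩
  have hid2 : ∀ s, -g' s * (inner ℝ (-η' s) (η s) : ℝ)
      = f s + ((α-δ)/2) * (-g' s * ‖η s‖^2) := by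
    intro s
    simp only [hf, inner_sub_left, inner_neg_left, real_inner_smul_left,
      real_inner_self_eq_norm_sq]
    ring
  have hsum : (∫ s in Set.Ioi (0:ℝ), -g' s * (inner ℝ (-η' s) (η s) : ℝ))
      = (∫ s in Set.Ioi (0:ℝ), f s) + ((α-δ)/2) * ∫ s in Set.Ioi (0:ℝ), -g' s * ‖η s‖^2 := by
    rw [← integral_const_mul, ← integral_add hf_int (hη_int.const_mul _)]
    exact integral_congr_ae (Eventually.of_forall fun s => hid2 s)
  rw [hsum]
  have h2 : (0:ℝ) ≤ ∫ s in Set.Ioi (0:ℝ), -g' s * ‖η s‖^2 :=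
    setIntegral_nonneg measurableSet_Ioi fun s hs =>
      mul_nonneg (neg_nonneg.2 (hg'_nonpos s hs)) (by positivity)
  linarith [main]
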